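/- Let Φ be an n×n left-stochastic matrix and let π ∈ ℝⁿ be a probability vector with strictly positive entries such that every entry of Φπ is strictly positive. Then every complex eigenvalue of the composite matrix Φ̃_B Φ, where Φ̃_B = J_π Φᵀ J_{Φπ}^{-1} is the Bayes reverse, is a nonnegative real number. -/

import Mathlib

open Matrix BigOperators

/-- A left-stochastic matrix: nonnegative entries, each column summing to 1. -/
def IsLeftStochastic {n : ℕ} (M : Matrix (Fin n) (Fin n) ℝ) : Prop :=
  (∀ i j, 0 ≤ M i j) ∧ ∀ j, ∑ i, M i j = 1

/-- A probability vector with strictly positive entries. -/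
def IsPosProbVec {n : ℕ} (π : Fin n → ℝ) : Prop :=
  (∀ i, 0 < π i) ∧ ∑ i, π i = 1

/-- The Bayes reverse matrix: (Φ̃_B)_{i,j} = Φ_{j,i} π_i / (Φπ)_j. -/
noncomputable def bayesReverse {n : ℕ} (Φ : Matrix (Fin n) (Fin n) ℝ)
    (π : Fin n → ℝ) : Matrix (Fin n) (Fin n) ℝ :=
  fun i j => Φ j i * π i / Φ.mulVec π j

/-- Evaluating the characteristic polynomial is a determinant. -/
lemma eval_charpoly_det {m : ℕ} (M : Matrix (Fin m) (Fin m) ℂ) (r : ℂ) :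
    M.charpoly.eval r = (Matrix.scalar (Fin m) r - M).det := by
  rw [Matrix.charpoly, eval_det, Matrix.matPolyEquiv_charmatrix]
  simp

theorem bayes_composite_nonneg_spectrum {n : ℕ} (Φ : Matrix (Fin n) (Fin n) ℝ)
    (π : Fin n → ℝ) (hΦ : IsLeftStochastic Φ) (hπ : IsPosProbVec π)
    (hΦπ : ∀ j, 0 < Φ.mulVec π j) :
    ∀ z : ℂ, ((bayesReverse Φ π * Φ).charpoly.map (algebraMap ℝ ℂ)).IsRoot z →
      z.im = 0 ∧ 0 ≤ z.re := by
  obtain ⟨hπ0, hπ1⟩ := hπ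
  intro z hz
  set A : Matrix (Fin n) (Fin n) ℝ :=
    Matrix.of fun k i => Φ k i * Real.sqrt (π i) / Real.sqrt (Φ.mulVec π k) with hA
  -- the key similarity identity over ℝ
  have key : bayesReverse Φ π * Φ =
      Matrix.diagonal (fun i => Real.sqrt (π i)) * (Aᵀ * A) *
        Matrix.diagonal (fun i => (Real.sqrt (π i))⁻¹) := by
    ext i j
    rw [Matrix.mul_apply, Matrix.mul_diagonal, Matrix.diagonal_mul, Matrix.mul_apply,
      Finset.mul_sum, Finset.sum_mul]
    apply Finset.sum_congr rfl
    intro k _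
    have hdi : Real.sqrt (π i) * Real.sqrt (π i) = π i := Real.mul_self_sqrt (hπ0 i).le
    have hdj : Real.sqrt (π j) ≠ 0 := (Real.sqrt_pos.mpr (hπ0 j)).ne'
    have hek : Real.sqrt (Φ.mulVec π k) * Real.sqrt (Φ.mulVec π k) = Φ.mulVec π k :=
      Real.mul_self_sqrt (hΦπ k).le
    have hek0 : Real.sqrt (Φ.mulVec π k) ≠ 0 := (Real.sqrt_pos.mpr (hΦπ k)).ne'
    have hk0 : Φ.mulVec π k ≠ 0 := (hΦπ k).ne'
    simp only [bayesReverse, hA, Matrix.transpose_apply, Matrix.of_apply]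
    field_simp
    rw [Real.sq_sqrt (hΦπ k).le, Real.sq_sqrt (hπ0 i).le]
    ring
  -- move to ℂ
  set f : ℝ →+* ℂ := (algebraMap ℝ ℂ) with hf
  set Ac : Matrix (Fin n) (Fin n) ℂ := A.map f with hAc
  set Sc : Matrix (Fin n) (Fin n) ℂ := (Aᵀ * A).map f with hSc0
  have hSc : Sc = Acᵀ * Ac := by
    rw [hSc0, Matrix.map_mul, Matrix.transpose_map]
  set Dc : Matrix (Fin n) (Fin n) ℂ :=
    Matrix.diagonal (fun i => (Real.sqrt (π i) : ℂ)) with hDc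
  set Dc' : Matrix (Fin n) (Fin n) ℂ :=
    Matrix.diagonal (fun i => ((Real.sqrt (π i))⁻¹ : ℝ) : Fin n → ℂ) with hDc'
  have hMc : (bayesReverse Φ π * Φ).map f = Dc * Sc * Dc' := by
    rw [key, Matrix.map_mul, Matrix.map_mul]
    congr 1
    · congr 1
      rw [Matrix.diagonal_map (map_zero f)]
      rfl
    · rw [Matrix.diagonal_map (map_zero f)]
      rfl
  have hsq : ∀ i : Fin n, (Real.sqrt (π i) : ℂ) ≠ 0 := fun i => by
    exact_mod_cast Complex.ofReal_ne_zero.mpr (Real.sqrt_pos.mpr (hπ0 i)).ne'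
  have hDD : Dc * Dc' = 1 := by
    rw [hDc, hDc', Matrix.diagonal_mul_diagonal]
    have he : (fun i => (Real.sqrt (π i) : ℂ) * (((Real.sqrt (π i))⁻¹ : ℝ) : ℂ)) =
        fun _ : Fin n => (1 : ℂ) := by
      funext i
      push_cast
      exact mul_inv_cancel₀ (hsq i)
    rw [he, Matrix.diagonal_one]
  -- determinant of z - Sc vanishes
  have hdet : (Matrix.scalar (Fin n) z - (bayesReverse Φ π * Φ).map f).det = 0 := by
    have h1 : ((bayesReverse Φ π * Φ).map f).charpoly.eval z = 0 := by
      rw [Matrix.charpoly_map]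
      exact hz
    rwa [eval_charpoly_det] at h1
  have hconj : Matrix.scalar (Fin n) z - Dc * Sc * Dc' =
      Dc * (Matrix.scalar (Fin n) z - Sc) * Dc' := by
    rw [Matrix.mul_sub, Matrix.sub_mul]
    congr 1
    have hs : Matrix.scalar (Fin n) z = z • (1 : Matrix (Fin n) (Fin n) ℂ) := by
      ext i j
      by_cases h : i = j
      · subst h; simp [Matrix.scalar_apply]
      · simp [Matrix.scalar_apply, Matrix.diagonal_apply_ne _ h, Matrix.one_apply_ne h]
    rw [hs, mul_smul_comm, mul_one, Matrix.smul_mul, hDD]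
  have hdet2 : (Matrix.scalar (Fin n) z - Sc).det = 0 := by
    rw [hMc, hconj, Matrix.det_mul, Matrix.det_mul] at hdet
    have h1 : Dc.det * Dc'.det = 1 := by rw [← Matrix.det_mul, hDD, Matrix.det_one]
    have : (Matrix.scalar (Fin n) z - Sc).det =
        Dc.det * (Matrix.scalar (Fin n) z - Sc).det * Dc'.det := by
      linear_combination (Matrix.scalar (Fin n) z - Sc).det * h1.symm
    rw [this, hdet]
  -- eigenvector
  obtain ⟨v, hv0, hv⟩ := Matrix.exists_mulVec_eq_zero_iff.mpr hdet2
  have hvS : Sc.mulVec v = z • v := by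
    have h2 := hv
    rw [Matrix.sub_mulVec] at h2
    have h3 : (Matrix.scalar (Fin n) z).mulVec v = z • v := by
      ext i
      simp [Matrix.scalar, Matrix.mulVec_diagonal]
    rw [h3] at h2
    exact (sub_eq_zero.mp h2).symm
  set w : Fin n → ℂ := Ac.mulVec v with hw
  have hAcH : Acᴴ = Acᵀ := by
    ext i j
    simp [hAc, Matrix.conjTranspose_apply, Matrix.map_apply, hf, Complex.conj_ofReal]
  have hsw : star v ⬝ᵥ Sc.mulVec v = star w ⬝ᵥ w := by
    rw [hSc, ← Matrix.mulVec_mulVec, Matrix.dotProduct_mulVec]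
    congr 1
    rw [← hAcH, ← Matrix.star_mulVec]
  have hzv : star v ⬝ᵥ Sc.mulVec v = z * (star v ⬝ᵥ v) := by
    rw [hvS, dotProduct_smul, smul_eq_mul]
  have hb : star v ⬝ᵥ v = ((∑ i, Complex.normSq (v i) : ℝ) : ℂ) := by
    simp only [dotProduct, Pi.star_apply]
    push_cast
    exact Finset.sum_congr rfl fun i _ => by
      rw [Complex.star_def, ← Complex.normSq_eq_conj_mul_self]
  have ha : star w ⬝ᵥ w = ((∑ i, Complex.normSq (w i) : ℝ) : ℂ) := by
    simp only [dotProduct, Pi.star_apply]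
    push_cast
    exact Finset.sum_congr rfl fun i _ => by
      rw [Complex.star_def, ← Complex.normSq_eq_conj_mul_self]
  obtain ⟨i0, hi0⟩ := Function.ne_iff.mp hv0
  have hbpos : 0 < ∑ i, Complex.normSq (v i) :=
    Finset.sum_pos' (fun i _ => Complex.normSq_nonneg _)
      ⟨i0, Finset.mem_univ _, Complex.normSq_pos.mpr hi0⟩
  have hanneg : 0 ≤ ∑ i, Complex.normSq (w i) :=
    Finset.sum_nonneg fun i _ => Complex.normSq_nonneg _
  have hbne : ((∑ i, Complex.normSq (v i) : ℝ) : ℂ) ≠ 0 :=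
    Complex.ofReal_ne_zero.mpr hbpos.ne'
  have hzeq : z * ((∑ i, Complex.normSq (v i) : ℝ) : ℂ) =
      ((∑ i, Complex.normSq (w i) : ℝ) : ℂ) := by
    rw [← hb, ← hzv, hsw, ha]
  have hz2 : z = (((∑ i, Complex.normSq (w i)) / (∑ i, Complex.normSq (v i)) : ℝ) : ℂ) := by
    rw [Complex.ofReal_div, eq_div_iff hbne]
    exact hzeq
  rw [hz2]
  exact ⟨Complex.ofReal_im _, by
    rw [Complex.ofReal_re]
    exact div_nonneg hanneg hbpos.le⟩
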